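/- If a TSS P is complete—i.e., for each closed term p and action a, either P ⊢_ws p ↛a or P ⊢_ws p →a q for some q—then CT⁻ = PT⁻ and CT⁺ = PT⁺, i.e., the 3-valued transition relation of the well-founded semantics is 2-valued. -/

import Mathlib

open Classical
attribute [local instance] Classical.propDecidable

universe u

/-- Terms with recursion over a signature: function symbols `F` with arities `ar`. -/
inductive Tm (Var F : Type) (ar : F → ℕ) : Type where
  | var : Var → Tm Var F ar
  | app : (f : F) → (Fin (ar f) → Tm Var F ar) → Tm Var F ar
  | rcs : (V : Set Var) → (Var → Tm Var F ar) → Var → Tm Var F ar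

variable {Var A F : Type} {ar : F → ℕ}

/-- Free variables of a term. -/
noncomputable def Tm.fv : Tm Var F ar → Set Var
  | .var x => {x}
  | .app _ ts => ⋃ i, (ts i).fv
  | .rcs V S _ => (⋃ Y ∈ V, (S Y).fv) \ V

def Tm.Closed (t : Tm Var F ar) : Prop := t.fv = ∅

/-- Substitution (intended for closed substitutions; bound variables are skipped). -/
noncomputable def Tm.subst (ρ : Var → Tm Var F ar) : Tm Var F ar → Tm Var F ar
  | .var x => ρ x
  | .app f ts => .app f (fun i => (ts i).subst ρ)
  | .rcs V S X => .rcs V (fun Y => (S Y).subst (fun z => if z ∈ V then .var z else ρ z)) X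

/-- Positive and negative literals. -/
inductive Lit (Var A F : Type) (ar : F → ℕ) : Type where
  | pos : Tm Var F ar → A → Tm Var F ar → Lit Var A F ar
  | neg : Tm Var F ar → A → Lit Var A F ar

def Lit.ClosedPos : Lit Var A F ar → Prop
  | .pos t _ u => t.Closed ∧ u.Closed
  | .neg _ _ => False

def Lit.ClosedNeg : Lit Var A F ar → Prop
  | .pos _ _ _ => False
  | .neg t _ => t.Closed

def Lit.Closed (l : Lit Var A F ar) : Prop := l.ClosedPos ∨ l.ClosedNeg

/-- Two literals deny each other. -/
def Lit.deny : Lit Var A F ar → Lit Var A F ar → Prop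
  | .pos t a _, .neg u b => t = u ∧ a = b
  | .neg u b, .pos t a _ => t = u ∧ a = b
  | _, _ => False

noncomputable def Lit.subst (σ : Var → Tm Var F ar) : Lit Var A F ar → Lit Var A F ar
  | .pos t a u => .pos (t.subst σ) a (u.subst σ)
  | .neg t a => .neg (t.subst σ) a

/-- A transition rule: premises and a positive conclusion. -/
structure Rule (Var A F : Type) (ar : F → ℕ) : Type where
  prem : Set (Lit Var A F ar)
  src : Tm Var F ar
  act : A
  tgt : Tm Var F ar

def Rule.concl (r : Rule Var A F ar) : Lit Var A F ar := .pos r.src r.act r.tgt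

/-- A transition system specification. -/
structure TSS (Var A F : Type) (ar : F → ℕ) : Type where
  rules : Set (Rule Var A F ar)

/-- Provability of a transition rule `H/α` from a TSS. -/
inductive Proves (P : TSS Var A F ar) : Set (Lit Var A F ar) → Lit Var A F ar → Prop where
  | hyp {H : Set (Lit Var A F ar)} {α : Lit Var A F ar} : α ∈ H → Proves P H α
  | rule {H : Set (Lit Var A F ar)} (r : Rule Var A F ar) (σ : Var → Tm Var F ar) :
      r ∈ P.rules → (∀ β ∈ r.prem, Proves P H (β.subst σ)) →
      Proves P H (Lit.pos (r.src.subst σ) r.act (r.tgt.subst σ))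

/-- The underapproximations `CT⁺_λ` of the well-founded semantics, by transfinite recursion. -/
noncomputable def CTp (P : TSS Var A F ar) (l : Ordinal) : Set (Lit Var A F ar) :=
  {β | β.ClosedPos ∧ Proves P
    {δ | δ.ClosedNeg ∧ ∀ γ,
        (γ.ClosedPos ∧ Proves P
          {δ' | δ'.ClosedNeg ∧ ∀ κ, κ < l → ∀ γ' ∈ CTp P κ, ¬ Lit.deny δ' γ'} γ) →
        ¬ Lit.deny δ γ} β}
termination_by l

/-- `PT⁻_λ`: closed negative literals not denying any literal in `CT⁺_κ`, `κ < λ`. -/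
noncomputable def PTm (P : TSS Var A F ar) (l : Ordinal) : Set (Lit Var A F ar) :=
  {δ | δ.ClosedNeg ∧ ∀ κ, κ < l → ∀ γ ∈ CTp P κ, ¬ Lit.deny δ γ}

/-- `PT⁺_λ`: closed positive literals provable under hypotheses `PT⁻_λ`. -/
noncomputable def PTp (P : TSS Var A F ar) (l : Ordinal) : Set (Lit Var A F ar) :=
  {β | β.ClosedPos ∧ Proves P (PTm P l) β}

/-- `CT⁻_λ`: closed negative literals not denying any literal in `PT⁺_λ`. -/
noncomputable def CTm (P : TSS Var A F ar) (l : Ordinal) : Set (Lit Var A F ar) :=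
  {δ | δ.ClosedNeg ∧ ∀ γ ∈ PTp P l, ¬ Lit.deny δ γ}

/-- A closure ordinal for the approximation sequences. -/
def IsClosureOrdinal (P : TSS Var A F ar) (κ : Ordinal) : Prop :=
  ∀ l, κ < l → PTm P l = PTm P κ ∧ PTp P l = PTp P κ ∧ CTm P l = CTm P κ ∧ CTp P l = CTp P κ

/-- The stabilized sets of the well-founded semantics. -/
noncomputable def ctPos (P : TSS Var A F ar) : Set (Lit Var A F ar) := ⋃ l : Ordinal.{0}, CTp P l
noncomputable def ptPos (P : TSS Var A F ar) : Set (Lit Var A F ar) := ⋂ l : Ordinal.{0}, PTp P l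
noncomputable def ctNeg (P : TSS Var A F ar) : Set (Lit Var A F ar) := ⋃ l : Ordinal.{0}, CTm P l
noncomputable def ptNeg (P : TSS Var A F ar) : Set (Lit Var A F ar) := ⋂ l : Ordinal.{0}, PTm P l

/-- Certain transitions `p →a q`. -/
noncomputable def ctr (P : TSS Var A F ar) (p : Tm Var F ar) (a : A) (q : Tm Var F ar) : Prop :=
  Lit.pos p a q ∈ ctPos P

/-- Possible transitions `p ⇢a q`. -/
noncomputable def ptr (P : TSS Var A F ar) (p : Tm Var F ar) (a : A) (q : Tm Var F ar) : Prop :=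
  Lit.pos p a q ∈ ptPos P

/-- Well-supported provability of a closed literal. -/
inductive WS (P : TSS Var A F ar) : Lit Var A F ar → Prop where
  | pos (r : Rule Var A F ar) (σ : Var → Tm Var F ar) :
      r ∈ P.rules →
      (Lit.pos (r.src.subst σ) r.act (r.tgt.subst σ)).ClosedPos →
      (∀ β ∈ r.prem, (β.subst σ).Closed) →
      (∀ β ∈ r.prem, WS P (β.subst σ)) →
      WS P (Lit.pos (r.src.subst σ) r.act (r.tgt.subst σ))
  | neg (t : Tm Var F ar) (a : A) (K : Set (Lit Var A F ar)) :
      t.Closed →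
      (∀ β ∈ K, β.Closed) →
      (∀ β ∈ K, WS P β) →
      (∀ N : Set (Lit Var A F ar), (∀ δ ∈ N, δ.ClosedNeg) →
        ∀ γ : Lit Var A F ar, γ.ClosedPos → Lit.deny γ (Lit.neg t a) → Proves P N γ →
        ∃ β ∈ K, ∃ δ ∈ N, Lit.deny β δ) →
      WS P (Lit.neg t a)

/-- A (modal) bisimulation on the 3-valued transition system of `P`. -/
noncomputable def IsBisim (P : TSS Var A F ar) (R : Tm Var F ar → Tm Var F ar → Prop) : Prop :=
  ∀ p q, R p q →
    (∀ a p', ctr P p a p' → ∃ q', ctr P q a q' ∧ R p' q') ∧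
    (∀ a q', ptr P q a q' → ∃ p', ptr P p a p' ∧ R p' q')

/-- Modal refinement: the bisimulation preorder `⊑_B`. -/
noncomputable def refines (P : TSS Var A F ar) (p q : Tm Var F ar) : Prop :=
  ∃ R, IsBisim P R ∧ R p q

/-- Bisimulation equivalence `≡_B`, the kernel of `⊑_B`. -/
noncomputable def bisimEq (P : TSS Var A F ar) (p q : Tm Var F ar) : Prop :=
  refines P p q ∧ refines P q p

/-- `⟨S_X|S⟩`: the body `S X` with every bound variable `Y ∈ V` replaced by `⟨Y|S⟩`. -/
noncomputable def Tm.recUnfold (V : Set Var) (S : Var → Tm Var F ar) (X : Var) : Tm Var F ar :=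
  (S X).subst (fun z => if z ∈ V then .rcs V S z else .var z)

/-- The recursion rule `(⟨S_X|S⟩ →a z)/(⟨X|S⟩ →a z)`. -/
noncomputable def recRule (V : Set Var) (S : Var → Tm Var F ar) (X : Var) (a : A) (z : Var) :
    Rule Var A F ar :=
  ⟨{Lit.pos (Tm.recUnfold V S X) a (.var z)}, .rcs V S X, a, .var z⟩

def Rule.isRecRule (r : Rule Var A F ar) : Prop :=
  ∃ (V : Set Var) (S : Var → Tm Var F ar) (X : Var) (a : A) (z : Var),
    X ∈ V ∧ z ∉ (Tm.rcs V S X).fv ∧ r = recRule V S X a z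

/-- ntytt: right-hand sides of positive premises are distinct variables not occurring in the source. -/
def Rule.ntytt (r : Rule Var A F ar) : Prop :=
  (∀ l ∈ r.prem, ∀ t a u, l = Lit.pos t a u → ∃ y, u = Tm.var y ∧ y ∉ r.src.fv) ∧
  (∀ l₁ ∈ r.prem, ∀ l₂ ∈ r.prem, ∀ t₁ a₁ y₁ t₂ a₂ y₂,
    l₁ = Lit.pos t₁ a₁ (.var y₁) → l₂ = Lit.pos t₂ a₂ (.var y₂) → l₁ ≠ l₂ → y₁ ≠ y₂)

/-- ntyxt: the source is a variable. -/
def Rule.ntyxt (r : Rule Var A F ar) : Prop := ∃ x, r.src = Tm.var x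

/-- ntyft: the source is a function symbol applied to distinct variables. -/
def Rule.ntyft (r : Rule Var A F ar) : Prop :=
  ∃ (f : F) (xs : Fin (ar f) → Var), Function.Injective xs ∧
    r.src = Tm.app f (fun i => Tm.var (xs i))

def Rule.positive (r : Rule Var A F ar) : Prop :=
  ∀ l ∈ r.prem, ∃ t a u, l = Lit.pos t a u

def TSS.Positive (P : TSS Var A F ar) : Prop := ∀ r ∈ P.rules, r.positive

/-- A TSS is in the ntyft/ntyxt format with recursion. -/
def TSS.NtyftNtyxtRec (P : TSS Var A F ar) : Prop :=
  (∀ (V : Set Var) (S : Var → Tm Var F ar) (X : Var) (a : A), X ∈ V →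
    ∃ z, z ∉ (Tm.rcs V S X).fv ∧ recRule V S X a z ∈ P.rules) ∧
  (∀ r ∈ P.rules, r.isRecRule ∨ (r.ntytt ∧ (r.ntyxt ∨ r.ntyft)))

/-- A TSS is in the tyft/tyxt format with recursion. -/
def TSS.TyftTyxtRec (P : TSS Var A F ar) : Prop :=
  P.NtyftNtyxtRec ∧ P.Positive

/-- Operator-compatibility: congruence condition (1) for the operators of the signature. -/
def OpCompatible (le : Tm Var F ar → Tm Var F ar → Prop) : Prop :=
  ∀ (f : F) (ps qs : Fin (ar f) → Tm Var F ar),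
    (∀ i, le (ps i) (qs i)) → le (.app f ps) (.app f qs)

/-- A lean precongruence. -/
def LeanPrecong (le : Tm Var F ar → Tm Var F ar → Prop) : Prop :=
  ∀ (t : Tm Var F ar) (ρ ν : Var → Tm Var F ar),
    (∀ x, (ρ x).Closed) → (∀ x, (ν x).Closed) → (∀ x, le (ρ x) (ν x)) →
    le (t.subst ρ) (t.subst ν)

/-- A full precongruence. -/
def FullPrecong (le : Tm Var F ar → Tm Var F ar → Prop) : Prop :=
  OpCompatible le ∧
  ∀ (W : Set Var) (S S' : Var → Tm Var F ar) (X : Var), X ∈ W →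
    (∀ Y ∈ W, (S Y).fv ⊆ W) → (∀ Y ∈ W, (S' Y).fv ⊆ W) →
    (∀ σ : Var → Tm Var F ar, (∀ x, (σ x).Closed) →
      ∀ Y ∈ W, le ((S Y).subst σ) ((S' Y).subst σ)) →
    le (.rcs W S X) (.rcs W S' X)



section Aux
open Ordinal

variable (P : TSS Var A F ar)

theorem Proves_mono {H H' : Set (Lit Var A F ar)} (hs : H ⊆ H') {α} (h : Proves P H α) :
    Proves P H' α := by
  induction h with
  | hyp h => exact .hyp (hs h)
  | rule r σ hr hp ih => exact .rule r σ hr ih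

theorem CTp_eq (l : Ordinal) : CTp P l = {β | β.ClosedPos ∧ Proves P (CTm P l) β} := by
  rw [CTp]; rfl

theorem key (μ l : Ordinal.{u}) : CTp P μ ⊆ PTp P l := by
  intro β hβ
  rw [CTp_eq] at hβ
  refine ⟨hβ.1, Proves_mono P ?_ hβ.2⟩
  intro δ hδ
  exact ⟨hδ.1, fun κ hκ γ hγ => hδ.2 γ (key κ μ hγ)⟩
termination_by (max μ l, min μ l)
decreasing_by
  rcases lt_or_ge μ l with h | h
  · apply Prod.Lex.left
    rw [max_eq_right h.le]
    exact max_lt hκ h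
  · have e1 : max κ μ = max μ l := by
      rw [max_eq_left h, max_eq_right (hκ.le.trans h)]
    rw [e1]
    apply Prod.Lex.right
    rw [min_eq_right h, min_eq_left (hκ.le.trans h)]
    exact hκ

theorem PTm_anti {l l' : Ordinal} (h : l ≤ l') : PTm P l' ⊆ PTm P l :=
  fun δ hδ => ⟨hδ.1, fun κ hκ => hδ.2 κ (hκ.trans_le h)⟩

theorem PTp_anti {l l' : Ordinal} (h : l ≤ l') : PTp P l' ⊆ PTp P l :=
  fun β hβ => ⟨hβ.1, Proves_mono P (PTm_anti P h) hβ.2⟩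

theorem CTm_mono {l l' : Ordinal} (h : l ≤ l') : CTm P l ⊆ CTm P l' :=
  fun δ hδ => ⟨hδ.1, fun γ hγ => hδ.2 γ (PTp_anti P h hγ)⟩

theorem CTp_mono {l l' : Ordinal} (h : l ≤ l') : CTp P l ⊆ CTp P l' := by
  rw [CTp_eq, CTp_eq]
  exact fun β hβ => ⟨hβ.1, Proves_mono P (CTm_mono P h) hβ.2⟩

noncomputable def sup0 : Ordinal.{0} :=
  ⨆ β : ↥(ctPos P), (Set.mem_iUnion.1 β.2).choose

theorem ctPos_subset_sup0 : ctPos P ⊆ CTp P (sup0 P) := by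
  intro γ hγ
  have hspec := (Set.mem_iUnion.1 hγ).choose_spec
  exact CTp_mono P (Ordinal.le_iSup _ (⟨γ, hγ⟩ : ↥(ctPos P))) hspec

noncomputable def stab : Ordinal.{0} := sup0 P + 1

theorem sup0_lt_stab : sup0 P < stab P := by
  rw [stab, Ordinal.add_one_eq_succ]; exact Order.lt_succ _

theorem PTm_stab {l : Ordinal} (h : stab P ≤ l) : PTm P l = PTm P (stab P) := by
  apply subset_antisymm (PTm_anti P h)
  intro δ hδ
  refine ⟨hδ.1, fun κ hκ γ hγ => ?_⟩
  exact hδ.2 (sup0 P) (sup0_lt_stab P)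
    γ (ctPos_subset_sup0 P (Set.mem_iUnion.2 ⟨κ, hγ⟩))

theorem PTp_stab {l : Ordinal} (h : stab P ≤ l) : PTp P l = PTp P (stab P) := by
  unfold PTp; rw [PTm_stab P h]

theorem CTm_stab {l : Ordinal} (h : stab P ≤ l) : CTm P l = CTm P (stab P) := by
  unfold CTm; rw [PTp_stab P h]

theorem CTp_stab {l : Ordinal} (h : stab P ≤ l) : CTp P l = CTp P (stab P) := by
  rw [CTp_eq, CTp_eq, CTm_stab P h]

theorem ctPos_eq : ctPos P = CTp P (stab P) := by
  apply subset_antisymm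
  · intro γ hγ
    obtain ⟨l, hl⟩ := Set.mem_iUnion.1 hγ
    rcases le_total l (stab P) with h | h
    · exact CTp_mono P h hl
    · exact (CTp_stab P h) ▸ hl
  · exact Set.subset_iUnion (fun l => CTp P l) (stab P)

theorem ctNeg_eq : ctNeg P = CTm P (stab P) := by
  apply subset_antisymm
  · intro γ hγ
    obtain ⟨l, hl⟩ := Set.mem_iUnion.1 hγ
    rcases le_total l (stab P) with h | h
    · exact CTm_mono P h hl
    · exact (CTm_stab P h) ▸ hl
  · exact Set.subset_iUnion (fun l => CTm P l) (stab P)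

theorem ptNeg_eq : ptNeg P = PTm P (stab P) := by
  apply subset_antisymm
  · exact Set.iInter_subset (fun l => PTm P l) (stab P)
  · intro δ hδ
    refine Set.mem_iInter.2 fun l => ?_
    rcases le_total l (stab P) with h | h
    · exact PTm_anti P h hδ
    · exact (PTm_stab P h).symm ▸ hδ

theorem ptPos_eq : ptPos P = PTp P (stab P) := by
  apply subset_antisymm
  · exact Set.iInter_subset (fun l => PTp P l) (stab P)
  · intro β hβ
    refine Set.mem_iInter.2 fun l => ?_
    rcases le_total l (stab P) with h | h
    · exact PTp_anti P h hβ
    · exact (PTp_stab P h).symm ▸ hβ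

theorem sound {α} (h : WS P α) :
    (∀ t a u, α = Lit.pos t a u → α ∈ CTp P (stab P)) ∧
    (∀ t a, α = Lit.neg t a → α ∈ CTm P (stab P)) := by
  induction h with
  | pos r σ hr hcl hclp hws ih =>
    refine ⟨fun t a u _ => ?_, fun t a heq => by cases heq⟩
    rw [CTp_eq]
    refine ⟨hcl, Proves.rule r σ hr fun β hβ => ?_⟩
    cases hβs : β.subst σ with
    | pos t' a' u' =>
      have hm := (ih β hβ).1 t' a' u' hβs
      rw [hβs] at hm
      rw [CTp_eq] at hm
      exact hm.2
    | neg t' a' =>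
      exact Proves.hyp (hβs ▸ (ih β hβ).2 t' a' hβs)
  | neg t a K hct hK hKws hmain ih =>
    refine ⟨fun t' a' u heq => (by cases heq), fun t' a' _ => ?_⟩
    refine ⟨hct, fun γ hγ hden => ?_⟩
    have hγpos := hγ.1
    cases γ with
    | neg _ _ => exact hγpos.elim
    | pos u b q =>
      obtain ⟨β, hβK, δ, hδN, hbd⟩ :=
        hmain (PTm P (stab P)) (fun δ hδ => hδ.1) (Lit.pos u b q) hγpos hden hγ.2
      have hδneg := hδN.1
      cases δ with
      | pos _ _ _ => exact hδneg.elim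
      | neg tδ aδ =>
        cases β with
        | neg _ _ => exact hbd.elim
        | pos tβ aβ uβ =>
          have hβC : Lit.pos tβ aβ uβ ∈ CTp P (stab P) := (ih _ hβK).1 tβ aβ uβ rfl
          have hδ1 : Lit.neg tδ aδ ∈ PTm P (stab P + 1) := by
            rw [PTm_stab P (le_self_add)]
            exact hδN
          exact hδ1.2 (stab P)
            (by rw [Ordinal.add_one_eq_succ]; exact Order.lt_succ _)
            (Lit.pos tβ aβ uβ) hβC hbd

end Aux

/-- a complete TSS has a 2-valued well-founded semantics. -/
theorem stmt6 (P : TSS Var A F ar)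
    (hcomplete : ∀ p : Tm Var F ar, p.Closed → ∀ a : A,
      WS P (Lit.neg p a) ∨ ∃ q, WS P (Lit.pos p a q)) :
    ctNeg P = ptNeg P ∧ ctPos P = ptPos P := by
  have hNM : PTm P (stab P) ⊆ CTm P (stab P) := by
    intro δ hδ
    have h1 := hδ.1
    cases δ with
    | pos _ _ _ => exact h1.elim
    | neg p a =>
      rcases hcomplete p h1 a with hws | ⟨q, hws⟩
      · exact (sound P hws).2 p a rfl
      · exfalso
        have hq : Lit.pos p a q ∈ CTp P (stab P) := (sound P hws).1 p a q rfl
        have hδ1 : Lit.neg p a ∈ PTm P (stab P + 1) := by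
          rw [PTm_stab P (le_self_add)]; exact hδ
        exact hδ1.2 (stab P)
          (by rw [Ordinal.add_one_eq_succ]; exact Order.lt_succ _)
          (Lit.pos p a q) hq ⟨rfl, rfl⟩
  have hMN : CTm P (stab P) ⊆ PTm P (stab P) := fun δ hδ =>
    ⟨hδ.1, fun κ hκ γ hγ => hδ.2 γ (key P κ (stab P) hγ)⟩
  have hMNe : CTm P (stab P) = PTm P (stab P) := subset_antisymm hMN hNM
  constructor
  · rw [ctNeg_eq, ptNeg_eq, hMNe]
  · rw [ctPos_eq, ptPos_eq]
    apply subset_antisymm (key P _ _)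
    intro β hβ
    rw [CTp_eq]
    exact ⟨hβ.1, Proves_mono P hNM hβ.2⟩
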